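/- Let s and t be integers with 2 ≤ s ≤ t−1, let G be a finite simple graph, let b be an integer, and let i be an integer with t−s+1 ≤ i ≤ t−1. If γ^{s/t}(G) = b − i/t, then γ^{1/t}(G) < b − 1. -/

import Mathlib

open Filter

/-- A `c`-self dominating function of `G` with values in `{0, 1, c}`. -/
def SimpleGraph.IsSDF {V : Type*} (G : SimpleGraph V) (c : ℝ) (f : V → ℝ) : Prop :=
  (∀ u, f u = 0 ∨ f u = 1 ∨ f u = c) ∧
  (∀ u, c ≤ f u ∨ ∃ v, G.Adj u v ∧ 1 ≤ f v)

/-- The `c`-self domination number of `G`. -/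
noncomputable def SimpleGraph.selfDom {V : Type*} [Fintype V] (G : SimpleGraph V) (c : ℝ) : ℝ :=
  sInf {w : ℝ | ∃ f : V → ℝ, G.IsSDF c f ∧ w = ∑ u, f u}

lemma sdf_set_finite {V : Type*} [Fintype V] (G : SimpleGraph V) (c : ℝ) :
    {w : ℝ | ∃ f : V → ℝ, G.IsSDF c f ∧ w = ∑ u, f u}.Finite := by
  have h1 : {f : V → ℝ | G.IsSDF c f}.Finite := by
    apply Set.Finite.subset
      (Set.Finite.pi (fun _ : V =>
        (Set.finite_singleton c).insert 1 |>.insert 0))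
    intro f hf
    simp only [Set.mem_pi, Set.mem_univ, forall_true_left]
    intro u
    simpa using hf.1 u
  apply Set.Finite.subset (h1.image (fun f => ∑ u, f u))
  rintro w ⟨f, hf, rfl⟩
  exact ⟨f, hf, rfl⟩

lemma sdf_set_nonempty {V : Type*} [Fintype V] (G : SimpleGraph V) (c : ℝ) :
    {w : ℝ | ∃ f : V → ℝ, G.IsSDF c f ∧ w = ∑ u, f u}.Nonempty :=
  ⟨∑ _u : V, c, fun _ => c, ⟨fun _ => Or.inr (Or.inr rfl), fun _ => Or.inl le_rfl⟩, rfl⟩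

lemma selfDom_mem {V : Type*} [Fintype V] (G : SimpleGraph V) (c : ℝ) :
    ∃ f : V → ℝ, G.IsSDF c f ∧ G.selfDom c = ∑ u, f u :=
  (sdf_set_nonempty G c).csInf_mem (sdf_set_finite G c)

lemma selfDom_le {V : Type*} [Fintype V] (G : SimpleGraph V) (c : ℝ) (f : V → ℝ)
    (hf : G.IsSDF c f) : G.selfDom c ≤ ∑ u, f u :=
  csInf_le (sdf_set_finite G c).bddBelow ⟨f, hf, rfl⟩

set_option maxHeartbeats 1000000 in
theorem stmt_15 {V : Type*} [Fintype V] (G : SimpleGraph V) (s t : ℕ)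
    (hs : 2 ≤ s) (hst : s ≤ t - 1) (b : ℤ) (i : ℕ)
    (hi₁ : t - s + 1 ≤ i) (hi₂ : i ≤ t - 1)
    (hγ : G.selfDom ((s : ℝ) / t) = (b : ℝ) - (i : ℝ) / t) :
    G.selfDom ((1 : ℝ) / t) < (b : ℝ) - 1 := by
  have ht3 : 3 ≤ t := by omega
  have hslt : s < t := by omega
  have htR : (0 : ℝ) < t := by positivity
  set c : ℝ := (s : ℝ) / t with hc
  have hc0 : (0 : ℝ) < c := by positivity
  have hc1 : c < 1 := by
    rw [hc, div_lt_one htR]; exact_mod_cast hslt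
  have hcne1 : c ≠ 1 := ne_of_lt hc1
  have hcne0 : c ≠ 0 := ne_of_gt hc0
  obtain ⟨f, hf, hfsum⟩ := selfDom_mem G c
  set A : Finset V := Finset.univ.filter (fun u => f u = 1) with hA
  set K : Finset V := Finset.univ.filter (fun u => f u = c) with hK
  set a : ℕ := A.card
  set k : ℕ := K.card
  -- decomposition of sums
  have hdecomp : ∀ (x : ℝ), ∑ u, (if f u = c then x else f u)
      = (a : ℝ) + (k : ℝ) * x := by
    intro x
    have : ∀ u : V, (if f u = c then x else f u)
        = (if f u = 1 then (1 : ℝ) else 0) + (if f u = c then x else 0) := by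
      intro u
      rcases hf.1 u with h | h | h <;> rw [h] <;>
        simp [hcne0.symm, hcne1.symm, hcne1]
    rw [Finset.sum_congr rfl (fun u _ => this u), Finset.sum_add_distrib,
      ← Finset.sum_filter, ← Finset.sum_filter, ← hA, ← hK,
      Finset.sum_const, Finset.sum_const]
    simp [mul_comm]
    rfl
  have hsumf : ∑ u, f u = (a : ℝ) + (k : ℝ) * c := by
    rw [← hdecomp c]
    exact Finset.sum_congr rfl (fun u _ => by split <;> simp_all)
  -- integer equation a*t + k*s = b*t - i
  have keyR : (a : ℝ) * t + (k : ℝ) * s = (b : ℝ) * t - i := by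
    have h := hγ.symm.trans (hfsum.trans hsumf)
    rw [hc] at h
    field_simp at h
    linarith
  have key : (a : ℤ) * t + (k : ℤ) * s = (b : ℤ) * t - i := by
    exact_mod_cast keyR
  -- k ≥ 2
  have hi1 : 1 ≤ i := by omega
  have hsi : t + 1 ≤ s + i := by omega
  have hk2 : 2 ≤ k := by
    by_contra hk
    interval_cases k
    · -- k = 0 : i = (b - a) * t
      have h0 : (i : ℤ) = (b - a) * t := by push_cast at key ⊢; linarith
      have e1 : (1:ℤ) ≤ (i:ℤ) := by exact_mod_cast hi1
      have e2 : (i:ℤ) + 1 ≤ (t:ℤ) := by exact_mod_cast (by omega : i + 1 ≤ t)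
      have e3 : (3:ℤ) ≤ (t:ℤ) := by exact_mod_cast ht3
      have hbd : (1 : ℤ) ≤ b - a := by nlinarith
      nlinarith
    · -- k = 1 : s + i = (b - a) * t
      have h0 : (s : ℤ) + i = (b - a) * t := by push_cast at key ⊢; linarith
      have htZ : (3:ℤ) ≤ (t:ℤ) := by exact_mod_cast ht3
      have h1 : (t : ℤ) + 1 ≤ (s:ℤ) + i := by exact_mod_cast hsi
      have h2 : (s:ℤ) + i ≤ 2 * t - 2 := by
        have e1 : (s:ℤ) + 1 ≤ (t:ℤ) := by exact_mod_cast (by omega : s + 1 ≤ t)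
        have e2 : (i:ℤ) + 1 ≤ (t:ℤ) := by exact_mod_cast (by omega : i + 1 ≤ t)
        omega
      have hbd : (2 : ℤ) ≤ b - a := by nlinarith
      nlinarith
  -- construct the 1/t SDF
  set g : V → ℝ := fun u => if f u = c then 1 / t else f u with hg
  have hgsdf : G.IsSDF (1 / t) g := by
    constructor
    · intro u
      rcases hf.1 u with h | h | h <;> simp [hg, h, hcne0.symm, hcne1.symm]
    · intro u
      rcases hf.2 u with h | ⟨v, hadj, hv⟩
      · left
        rcases hf.1 u with h' | h' | h'
        · exact absurd h (by rw [h']; exact not_le.2 hc0)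
        · simp only [hg, h', if_neg hcne1.symm]
          rw [div_le_one htR]
          exact_mod_cast (by omega : 1 ≤ t)
        · simp [hg, h']
      · right
        refine ⟨v, hadj, ?_⟩
        have hv1 : f v = 1 := by
          rcases hf.1 v with h' | h' | h' <;> rw [h'] at hv
          · linarith
          · exact h'
          · linarith
        simp [hg, hv1, hcne1.symm]
  have hsumg : ∑ u, g u = (a : ℝ) + (k : ℝ) * (1 / t) := hdecomp (1 / t)
  have hle := selfDom_le G (1 / t) g hgsdf
  rw [hsumg] at hle
  refine hle.trans_lt ?_
  -- a + k/t < b - 1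
  have hZ : (a : ℤ) * t + k < (b - 1) * t := by
    have hkZ : (2:ℤ) ≤ k := by exact_mod_cast hk2
    have hsZ : (2:ℤ) ≤ s := by exact_mod_cast hs
    have htiZ : (t:ℤ) - i ≤ (s:ℤ) - 1 := by
      have e1 : (t:ℤ) + 1 ≤ (s:ℤ) + (i:ℤ) := by exact_mod_cast hsi
      omega
    have h1 : (a:ℤ) * t + k = b * t - i - (k:ℤ) * ((s:ℤ) - 1) := by
      linear_combination key
    have h2 : 2 * ((s:ℤ) - 1) ≤ (k:ℤ) * ((s:ℤ) - 1) :=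
      mul_le_mul_of_nonneg_right hkZ (by omega)
    linarith [h1, h2, htiZ, hsZ]
  have hR : (a : ℝ) * t + k < ((b : ℝ) - 1) * t := by exact_mod_cast hZ
  rw [show (a : ℝ) + (k : ℝ) * (1 / t) = ((a : ℝ) * t + k) / t by field_simp,
    div_lt_iff₀ htR]
  linarith [hR]
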